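/- With notation as above: for $h$ in the open fundamental chamber $C$ and $i \in I$, the face of $\Xi_h = \operatorname{conv}(W\cdot h)$ cut out by the supporting hyperplane $H^{(i)} = \{h' : \langle \omega_i, h' \rangle = \langle \omega_i, h \rangle\}$ equals $F^{(i)} = \operatorname{conv}(W^{(i)} \cdot h)$, where $W^{(i)}$ is the standard subgroup of $W$ generated by all simple reflections except $s_i$. That is, $\Xi_h \cap H^{(i)} = \operatorname{conv}(W^{(i)} \cdot h)$. -/

import Mathlib

open scoped Pointwise

/-- The Coxeter matrix entry attached to a product `a_ij * a_ji` of entries of a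
generalized Cartan matrix, via the standard table (`0` encodes `∞`). -/
def gcmCoxeterEntry (p : ℤ) : ℕ :=
  if p = 0 then 2 else if p = 1 then 3 else if p = 2 then 4 else if p = 3 then 6 else 0

/-- The Weyl group of a symmetrizable generalized Cartan matrix, together with its action
on the real Cartan subalgebra of a free and cofree Kac–Moody root datum. -/
structure KMWeyl (n : ℕ) (V : Type*) [AddCommGroup V] [Module ℝ V]
    (W : Type*) [Group W] (M : CoxeterMatrix (Fin n)) where
  /-- the generalized Cartan matrix -/
  A : Matrix (Fin n) (Fin n) ℤ
  diag : ∀ i, A i i = 2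
  offDiag : ∀ i j, i ≠ j → A i j ≤ 0
  zeroIff : ∀ i j, (A i j = 0 ↔ A j i = 0)
  symmetrizable : ∃ D B : Matrix (Fin n) (Fin n) ℝ, D.IsDiag ∧ B.IsSymm ∧
    A.map (Int.cast : ℤ → ℝ) = D * B
  coxMat : ∀ i j, i ≠ j → M i j = gcmCoxeterEntry (A i j * A j i)
  /-- the Coxeter system structure on the Weyl group -/
  cs : CoxeterSystem M W
  /-- the linear action of the Weyl group on the Cartan subalgebra -/
  ρ : W →* (V →ₗ[ℝ] V)
  /-- the simple roots -/
  α : Fin n → (V →ₗ[ℝ] ℝ)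
  /-- the simple coroots -/
  cor : Fin n → V
  pairing : ∀ i j, α j (cor i) = (A i j : ℝ)
  refl : ∀ i v, ρ (cs.simple i) v = v - α i v • cor i
  freeRoots : LinearIndependent ℝ α
  cofree : LinearIndependent ℝ cor

namespace KMWeyl

variable {n : ℕ} {V : Type*} [AddCommGroup V] [Module ℝ V]
  {W : Type*} [Group W] {M : CoxeterMatrix (Fin n)}

/-- The orbit of a point `h` under the Weyl group. -/
def orb (K : KMWeyl n V W M) (h : V) : Set V := Set.range fun w => K.ρ w h

/-- The standard subgroup generated by the simple reflections indexed by `J`. -/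
def std (K : KMWeyl n V W M) (J : Set (Fin n)) : Subgroup W :=
  Subgroup.closure (K.cs.simple '' J)

/-- The support of `w`: the indices occurring in every reduced word for `w`. -/
def supp (K : KMWeyl n V W M) (w : W) : Set (Fin n) :=
  {i | ∀ l : List (Fin n), K.cs.wordProd l = w → l.length = K.cs.length w → i ∈ l}

end KMWeyl

/-- coefficient sequence for alternating words in the rank-2 subsystem -/
def xgSeq (p : ℤ) : ℕ → ℤ × ℤ
  | 0 => (1, 0)
  | t + 1 =>
    if Even t then ((xgSeq p t).1, (xgSeq p t).1 - (xgSeq p t).2)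
    else (p * (xgSeq p t).2 - (xgSeq p t).1, (xgSeq p t).2)

lemma xgSeq_even_invariant (p : ℤ) (hp : 4 ≤ p) (r : ℕ) :
    0 ≤ (xgSeq p (2 * r)).2 ∧ 2 * (xgSeq p (2 * r)).2 ≤ (xgSeq p (2 * r)).1 := by
  induction r with
  | zero => simp [xgSeq]
  | succ r ih =>
    obtain ⟨h1, h2⟩ := ih
    have e1 : 2 * (r + 1) = (2 * r + 1) + 1 := by ring
    have heven : Even (2 * r) := even_two_mul r
    have hodd : ¬ Even (2 * r + 1) := by simp [Nat.even_add_one, heven]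
    rw [e1]
    set x := (xgSeq p (2 * r)).1
    set g := (xgSeq p (2 * r)).2
    have hstep1 : xgSeq p (2 * r + 1) = (x, x - g) := by
      rw [xgSeq, if_pos heven]
    have hstep2 : xgSeq p (2 * r + 1 + 1) = (p * (x - g) - x, x - g) := by
      rw [xgSeq, if_neg hodd, hstep1]
    rw [hstep2]
    constructor
    · simp only; nlinarith
    · simp only; nlinarith

lemma xgSeq_nonneg_big (p : ℤ) (hp : 4 ≤ p) (t : ℕ) :
    0 ≤ (xgSeq p t).1 ∧ 0 ≤ (xgSeq p t).2 := by
  rcases Nat.even_or_odd t with ⟨r, hr⟩ | ⟨r, hr⟩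
  · have h2r : 2 * r = t := by omega
    have := xgSeq_even_invariant p hp r
    rw [h2r] at this
    omega
  · have h2r : 2 * r + 1 = t := by omega
    have h := xgSeq_even_invariant p hp r
    have heven : Even (2 * r) := even_two_mul r
    have hstep : xgSeq p (2 * r + 1) = ((xgSeq p (2 * r)).1, (xgSeq p (2 * r)).1 - (xgSeq p (2 * r)).2) := by
      rw [xgSeq, if_pos heven]
    rw [← h2r, hstep]
    constructor <;> simp only <;> omega

lemma xgSeq_nonneg (p : ℤ) (hp : 0 ≤ p) (t : ℕ)
    (ht : gcmCoxeterEntry p = 0 ∨ t + 1 ≤ gcmCoxeterEntry p) :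
    0 ≤ (xgSeq p t).1 ∧ 0 ≤ (xgSeq p t).2 := by
  by_cases h4 : 4 ≤ p
  · exact xgSeq_nonneg_big p h4 t
  · have hp3 : p = 0 ∨ p = 1 ∨ p = 2 ∨ p = 3 := by omega
    rcases hp3 with rfl | rfl | rfl | rfl <;> simp only [gcmCoxeterEntry] at ht <;> norm_num at ht
    · have ht' : t ≤ 1 := by omega
      interval_cases t <;> decide
    · have ht' : t ≤ 2 := by omega
      interval_cases t <;> decide
    · have ht' : t ≤ 3 := by omega
      interval_cases t <;> decide
    · have ht' : t ≤ 5 := by omega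
      interval_cases t <;> decide

namespace KMWeyl

variable {n : ℕ} {V : Type*} [AddCommGroup V] [Module ℝ V]
  {W : Type*} [Group W] {M : CoxeterMatrix (Fin n)}

variable (K : KMWeyl n V W M)

/-- Coefficients w.r.t. the linearly independent coroots are unique. -/
lemma coeff_eq {c d : Fin n → ℝ} (h : ∑ m, c m • K.cor m = ∑ m, d m • K.cor m) : c = d := by
  funext m
  have h0 : ∑ k, (c k - d k) • K.cor k = 0 := by
    simp only [sub_smul, Finset.sum_sub_distrib, h, sub_self]
  have := Fintype.linearIndependent_iff.mp K.cofree (fun k => c k - d k) h0 m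
  linarith

/-- The cone of nonnegative combinations of simple coroots. -/
def Cone : Set V := {v | ∃ c : Fin n → ℝ, (∀ k, 0 ≤ c k) ∧ v = ∑ k, c k • K.cor k}

lemma cor_mem_cone (j : Fin n) : K.cor j ∈ K.Cone := by
  refine ⟨fun k => if k = j then 1 else 0, fun k => by dsimp only; split <;> norm_num, ?_⟩
  simp [ite_smul]

lemma cone_comb {x y : V} (hx : x ∈ K.Cone) (hy : y ∈ K.Cone) {a b : ℝ}
    (ha : 0 ≤ a) (hb : 0 ≤ b) : a • x + b • y ∈ K.Cone := by
  obtain ⟨c, hc, rfl⟩ := hx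
  obtain ⟨d, hd, rfl⟩ := hy
  refine ⟨fun k => a * c k + b * d k, fun k => by have := hc k; have := hd k; positivity, ?_⟩
  rw [Finset.smul_sum, Finset.smul_sum, ← Finset.sum_add_distrib]
  congr 1; funext k
  simp [add_smul, mul_smul]

lemma rho_alt (j k : Fin n) (t : ℕ) :
    K.ρ (K.cs.wordProd (CoxeterSystem.alternatingWord j k t)) (K.cor j)
      = ((xgSeq (K.A j k * K.A k j) t).1 : ℝ) • K.cor j
        + (((- K.A j k) * (xgSeq (K.A j k * K.A k j) t).2 : ℤ) : ℝ) • K.cor k := by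
  induction t with
  | zero => simp [xgSeq, CoxeterSystem.alternatingWord]
  | succ t ih =>
    rw [CoxeterSystem.alternatingWord_succ']
    by_cases he : Even t
    · rw [if_pos he, K.cs.wordProd_cons, map_mul, Module.End.mul_apply, ih, map_add,
        LinearMap.map_smul, LinearMap.map_smul, K.refl, K.refl, K.pairing, K.pairing, K.diag]
      rw [show xgSeq (K.A j k * K.A k j) (t+1)
            = ((xgSeq (K.A j k * K.A k j) t).1,
               (xgSeq (K.A j k * K.A k j) t).1 - (xgSeq (K.A j k * K.A k j) t).2) from by
        rw [xgSeq, if_pos he]]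
      push_cast
      module
    · rw [if_neg he, K.cs.wordProd_cons, map_mul, Module.End.mul_apply, ih, map_add,
        LinearMap.map_smul, LinearMap.map_smul, K.refl, K.refl, K.pairing, K.pairing, K.diag]
      rw [show xgSeq (K.A j k * K.A k j) (t+1)
            = ((K.A j k * K.A k j) * (xgSeq (K.A j k * K.A k j) t).2
                - (xgSeq (K.A j k * K.A k j) t).1, (xgSeq (K.A j k * K.A k j) t).2) from by
        rw [xgSeq, if_neg he]]
      push_cast
      module

lemma word_alternating (j k : Fin n) (hjk : j ≠ k) :
    ∀ l : List (Fin n), (∀ c ∈ l, c = j ∨ c = k) → K.cs.IsReduced l →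
      l = CoxeterSystem.alternatingWord j k l.length ∨
      l = CoxeterSystem.alternatingWord k j l.length := by
  intro l
  induction l with
  | nil => intro _ _; left; rfl
  | cons c l ih =>
    intro hmem hred
    have hredl : K.cs.IsReduced l := by
      have := CoxeterSystem.IsReduced.drop (ω := c :: l) hred (j := 1)
      simpa using this
    have hne : ∀ c' t, l = c' :: t → c ≠ c' := by
      rintro c' t hl rfl
      rw [hl] at hred
      unfold CoxeterSystem.IsReduced at hred
      rw [K.cs.wordProd_cons, K.cs.wordProd_cons, K.cs.simple_mul_simple_cancel_left] at hred
      have := K.cs.length_wordProd_le t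
      simp only [List.length_cons] at hred
      omega
    have hc : c = j ∨ c = k := hmem c (by simp)
    rcases ih (fun c hc => hmem c (List.mem_cons_of_mem _ hc)) hredl with hl | hl
    · cases l with
      | nil =>
        rcases hc with rfl | rfl
        · right; rfl
        · left; rfl
      | cons c' t =>
        left
        have hcc : c ≠ c' := hne c' t rfl
        rw [List.length_cons] at hl
        have hl0 := hl
        rw [CoxeterSystem.alternatingWord_succ'] at hl
        obtain ⟨hc', hl'⟩ := List.cons.injEq .. ▸ hl
        show c :: c' :: t = CoxeterSystem.alternatingWord j k ((c' :: t).length + 1)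
        rw [CoxeterSystem.alternatingWord_succ', List.length_cons, ← hl0]
        congr 1
        rcases Nat.even_or_odd t.length with he | ho
        · rw [if_pos he] at hc'
          rw [if_neg (by simp [Nat.even_add_one, he])]
          rcases hc with rfl | rfl
          · rfl
          · exact absurd hc'.symm hcc
        · rw [if_neg (Nat.not_even_iff_odd.mpr ho)] at hc'
          rw [if_pos (by rw [Nat.even_add_one]; exact Nat.not_even_iff_odd.mpr ho)]
          rcases hc with rfl | rfl
          · exact absurd hc'.symm hcc
          · rfl
    · cases l with
      | nil =>
        rcases hc with rfl | rfl
        · right; rfl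
        · left; rfl
      | cons c' t =>
        right
        have hcc : c ≠ c' := hne c' t rfl
        rw [List.length_cons] at hl
        have hl0 := hl
        rw [CoxeterSystem.alternatingWord_succ'] at hl
        obtain ⟨hc', hl'⟩ := List.cons.injEq .. ▸ hl
        show c :: c' :: t = CoxeterSystem.alternatingWord k j ((c' :: t).length + 1)
        rw [CoxeterSystem.alternatingWord_succ', List.length_cons, ← hl0]
        congr 1
        rcases Nat.even_or_odd t.length with he | ho
        · rw [if_pos he] at hc'
          rw [if_neg (by simp [Nat.even_add_one, he])]
          rcases hc with rfl | rfl
          · exact absurd hc'.symm hcc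
          · rfl
        · rw [if_neg (Nat.not_even_iff_odd.mpr ho)] at hc'
          rw [if_pos (by rw [Nat.even_add_one]; exact Nat.not_even_iff_odd.mpr ho)]
          rcases hc with rfl | rfl
          · rfl
          · exact absurd hc'.symm hcc

theorem tits : ∀ (N : ℕ) (w : W) (j : Fin n), K.cs.length w ≤ N →
    K.cs.length (w * K.cs.simple j) = K.cs.length w + 1 → K.ρ w (K.cor j) ∈ K.Cone := by
  intro N
  induction N with
  | zero =>
    intro w j hw _
    have hw1 : w = 1 := K.cs.length_eq_zero_iff.mp (Nat.le_zero.mp hw)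
    subst hw1
    simpa using K.cor_mem_cone j
  | succ N IH =>
    intro w j hwN hwj
    by_cases hw1 : w = 1
    · subst hw1; simpa using K.cor_mem_cone j
    obtain ⟨k, hk⟩ := K.cs.exists_rightDescent_of_ne_one hw1
    have hk' : K.cs.length (w * K.cs.simple k) < K.cs.length w := hk
    have hkj : k ≠ j := by
      rintro rfl
      omega
    set D : Set ℕ := {d | ∃ (v : W) (l : List (Fin n)), (∀ c ∈ l, c = j ∨ c = k) ∧
      w = v * K.cs.wordProd l ∧ K.cs.length v + l.length = K.cs.length w ∧
      K.cs.length v = d} with hD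
    have hne : D.Nonempty := ⟨K.cs.length w, w, [], by simp, by simp, by simp, rfl⟩
    obtain ⟨v, l, hlmem, hvl, hadd, hvd⟩ := Nat.sInf_mem hne
    have hnod : ∀ c : Fin n, (c = j ∨ c = k) →
        K.cs.length (v * K.cs.simple c) = K.cs.length v + 1 := by
      intro c hcjk
      rcases K.cs.length_mul_simple v c with hgood | hbad
      · exact hgood
      · exfalso
        have hmem : K.cs.length (v * K.cs.simple c) ∈ D := by
          refine ⟨v * K.cs.simple c, c :: l, ?_, ?_, ?_, rfl⟩
          · intro c' hc'
            rcases List.mem_cons.mp hc' with rfl | hc'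
            · exact hcjk
            · exact hlmem c' hc'
          · rw [K.cs.wordProd_cons, mul_assoc, K.cs.simple_mul_simple_cancel_left]
            exact hvl
          · simp only [List.length_cons]; omega
        have := Nat.sInf_le hmem
        omega
    have hred : K.cs.length (K.cs.wordProd l) = l.length := by
      have h1 := K.cs.length_wordProd_le l
      have h2 := K.cs.length_mul_le v (K.cs.wordProd l)
      rw [← hvl] at h2
      omega
    have hconc : K.cs.length (K.cs.wordProd (l.concat j)) = l.length + 1 := by
      have h1 : K.cs.wordProd (l.concat j) = K.cs.wordProd l * K.cs.simple j :=
        K.cs.wordProd_concat j l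
      have h2 := K.cs.length_mul_le (K.cs.wordProd l) (K.cs.simple j)
      have h3 := K.cs.length_mul_le v (K.cs.wordProd l * K.cs.simple j)
      rw [← mul_assoc, ← hvl] at h3
      have h4 := K.cs.length_simple j
      rw [h1]
      rw [hwj] at h3
      omega
    have hlne : l ≠ [] := by
      rintro rfl
      rw [K.cs.wordProd_nil, mul_one] at hvl
      subst hvl
      have := hnod k (Or.inr rfl)
      omega
    have hlen0 : l.length ≠ 0 := fun hh => hlne (List.length_eq_zero_iff.mp hh)
    rcases K.word_alternating j k (Ne.symm hkj) l hlmem hred with hl | hl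
    swap
    · exfalso
      obtain ⟨t, ht⟩ : ∃ t, l.length = t + 1 := ⟨l.length - 1, by omega⟩
      rw [ht] at hl
      have hcancel : K.cs.wordProd (l.concat j) =
          K.cs.wordProd (CoxeterSystem.alternatingWord j k t) := by
        conv_lhs => rw [hl, CoxeterSystem.alternatingWord_succ]
        rw [K.cs.wordProd_concat, K.cs.wordProd_concat, K.cs.simple_mul_simple_cancel_right]
      have h5 := K.cs.length_wordProd_le (CoxeterSystem.alternatingWord j k t)
      rw [CoxeterSystem.length_alternatingWord] at h5
      rw [hcancel] at hconc
      omega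
    have hbound : M k j = 0 ∨ l.length + 1 ≤ M k j := by
      by_contra hcon
      push_neg at hcon
      obtain ⟨hM0, hMlt⟩ := hcon
      refine K.cs.not_isReduced_alternatingWord k j (m := l.length + 1) hM0 (by omega) ?_
      unfold CoxeterSystem.IsReduced
      rw [CoxeterSystem.length_alternatingWord]
      have heq : CoxeterSystem.alternatingWord k j (l.length + 1) = l.concat j := by
        rw [CoxeterSystem.alternatingWord_succ, ← hl]
      rw [heq]
      exact hconc
    set p : ℤ := K.A j k * K.A k j with hp
    have hMp : M k j = gcmCoxeterEntry p := by
      rw [K.coxMat k j hkj, mul_comm]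
    have hp0 : (0:ℤ) ≤ p := by
      have h1 := K.offDiag j k (Ne.symm hkj)
      have h2 := K.offDiag k j hkj
      have := mul_nonneg (neg_nonneg.mpr h1) (neg_nonneg.mpr h2)
      rw [neg_mul_neg] at this
      exact this
    have hxg := xgSeq_nonneg p hp0 l.length (by rw [← hMp]; exact hbound)
    have halt := K.rho_alt j k l.length
    rw [← hl] at halt
    have hXnn : (0:ℝ) ≤ ((xgSeq p l.length).1 : ℝ) := by exact_mod_cast hxg.1
    have hYnn : (0:ℝ) ≤ ((-K.A j k * (xgSeq p l.length).2 : ℤ) : ℝ) := by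
      have h1 := K.offDiag j k (Ne.symm hkj)
      have : (0:ℤ) ≤ -K.A j k * (xgSeq p l.length).2 :=
        mul_nonneg (by linarith) hxg.2
      exact_mod_cast this
    have hvN : K.cs.length v ≤ N := by omega
    have hIH1 := IH v j hvN (hnod j (Or.inl rfl))
    have hIH2 := IH v k hvN (hnod k (Or.inr rfl))
    rw [hvl, map_mul, Module.End.mul_apply, halt, map_add, LinearMap.map_smul,
      LinearMap.map_smul]
    exact K.cone_comb hIH1 hIH2 hXnn hYnn

lemma rho_word_cor (k : Fin n) :
    ∀ l : List (Fin n), (∀ c ∈ l, c ≠ k) →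
    ∃ e : Fin n → ℝ, e k = 0 ∧
      K.ρ (K.cs.wordProd l) (K.cor k) = K.cor k + ∑ m, e m • K.cor m := by
  intro l
  induction l with
  | nil => exact fun _ => ⟨0, rfl, by simp⟩
  | cons c t ih =>
    intro hmem
    obtain ⟨e, hek, he⟩ := ih (fun c' hc' => hmem c' (List.mem_cons_of_mem _ hc'))
    set s : ℝ := K.α c (K.cor k + ∑ m, e m • K.cor m) with hs
    refine ⟨fun m => e m + (if m = c then -s else 0), ?_, ?_⟩
    · have hkc : k ≠ c := Ne.symm (hmem c (by simp))
      simp [hek, hkc]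
    · rw [K.cs.wordProd_cons, map_mul, Module.End.mul_apply, he, K.refl, ← hs]
      have hsum : ∑ m, (if m = c then -s else 0) • K.cor m = -s • K.cor c := by
        simp [ite_smul]
      simp only [add_smul, Finset.sum_add_distrib, hsum]
      rw [neg_smul, sub_eq_add_neg]
      abel

theorem orbit_lemma (h : V) (hC : ∀ i, 0 < K.α i h) : ∀ (N : ℕ) (w : W), K.cs.length w = N →
    ∃ c : Fin n → ℝ, (∀ m, 0 ≤ c m) ∧ K.ρ w h = h - ∑ m, c m • K.cor m ∧
      ∃ l : List (Fin n), K.cs.wordProd l = w ∧ (∀ i, c i = 0 → i ∉ l) := by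
  intro N
  induction N with
  | zero =>
    intro w hw
    have hw1 : w = 1 := K.cs.length_eq_zero_iff.mp hw
    subst hw1
    exact ⟨0, fun m => le_rfl, by simp, [], by simp, by simp⟩
  | succ N IH =>
    intro w hw
    have hw1 : w ≠ 1 := by
      rintro rfl
      rw [K.cs.length_one] at hw
      omega
    obtain ⟨k, hk⟩ := K.cs.exists_rightDescent_of_ne_one hw1
    have hk' : K.cs.length (w * K.cs.simple k) < K.cs.length w := hk
    have hdich := K.cs.length_mul_simple w k
    set w' := w * K.cs.simple k with hw'def
    have hwrec : w' * K.cs.simple k = w := K.cs.simple_mul_simple_cancel_right k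
    have hw'len : K.cs.length w' = N := by omega
    obtain ⟨c', hc'nn, hc'eq, l', hl'prod, hl'supp⟩ := IH w' hw'len
    obtain ⟨d, hdnn, hdeq⟩ := K.tits (K.cs.length w') w' k le_rfl (by rw [hwrec]; omega)
    refine ⟨fun m => c' m + K.α k h * d m, ?_, ?_, l'.concat k, ?_, ?_⟩
    · intro m
      have h1 := hc'nn m
      have h2 := mul_nonneg (le_of_lt (hC k)) (hdnn m)
      positivity
    · rw [← hwrec, map_mul, Module.End.mul_apply, K.refl, map_sub, LinearMap.map_smul,
        hc'eq, hdeq]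
      simp only [add_smul, Finset.sum_add_distrib, mul_smul, ← Finset.smul_sum]
      abel
    · rw [K.cs.wordProd_concat, hl'prod, hwrec]
    · intro i hci
      simp only at hci
      have h2 : 0 ≤ K.α k h * d i := mul_nonneg (le_of_lt (hC k)) (hdnn i)
      have hc'i : c' i = 0 := by nlinarith [hc'nn i]
      have hdi : d i = 0 := by
        have h3 : K.α k h * d i = 0 := by nlinarith [hc'nn i]
        rcases mul_eq_zero.mp h3 with h4 | h4
        · exact absurd h4 (ne_of_gt (hC k))
        · exact h4
      have hnotl' : i ∉ l' := hl'supp i hc'i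
      have hik : i ≠ k := by
        rintro rfl
        obtain ⟨e, hek, heeq⟩ := K.rho_word_cor i l'
          (fun c' hc' => by rintro rfl; exact hnotl' hc')
        rw [hl'prod] at heeq
        have hco : ∑ m, d m • K.cor m
            = ∑ m, ((if m = i then (1:ℝ) else 0) + e m) • K.cor m := by
          rw [← hdeq, heeq]
          simp [add_smul, Finset.sum_add_distrib, ite_smul]
        have hfun := congrFun (K.coeff_eq hco) i
        simp only [hek, if_pos rfl, add_zero] at hfun
        rw [hdi] at hfun
        norm_num at hfun
      simp [List.concat_eq_append, hnotl', hik]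

lemma omega_sum (ω : Fin n → (V →ₗ[ℝ] ℝ)) (hω : ∀ i j, ω i (K.cor j) = if i = j then 1 else 0)
    (i : Fin n) (c : Fin n → ℝ) : ω i (∑ m, c m • K.cor m) = c i := by
  rw [map_sum]
  simp only [LinearMap.map_smul, smul_eq_mul, hω]
  rw [Finset.sum_congr rfl (fun m _ => by rw [mul_ite, mul_one, mul_zero])]
  simp

lemma word_mem_std (i : Fin n) (l : List (Fin n)) (hl : ∀ c ∈ l, c ≠ i) :
    K.cs.wordProd l ∈ K.std {j | j ≠ i} := by
  rw [CoxeterSystem.wordProd]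
  apply list_prod_mem
  intro x hx
  rw [List.mem_map] at hx
  obtain ⟨c, hc, rfl⟩ := hx
  exact Subgroup.subset_closure ⟨c, hl c hc, rfl⟩

lemma std_omega (ω : Fin n → (V →ₗ[ℝ] ℝ)) (hω : ∀ i j, ω i (K.cor j) = if i = j then 1 else 0)
    (i : Fin n) {w : W} (hw : w ∈ K.std {j | j ≠ i}) : ∀ x : V, ω i (K.ρ w x) = ω i x := by
  unfold std at hw
  induction hw using Subgroup.closure_induction with
  | mem g hg =>
    obtain ⟨c, hci, rfl⟩ := hg
    intro y
    rw [K.refl, map_sub, LinearMap.map_smul, smul_eq_mul, hω]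
    have : i ≠ c := Ne.symm hci
    simp [this]
  | one => simp
  | mul g g' hg hg' ihg ihg' =>
    intro y
    rw [map_mul, Module.End.mul_apply, ihg, ihg']
  | inv g hg ihg =>
    intro y
    have := ihg (K.ρ g⁻¹ y)
    rw [← Module.End.mul_apply, ← map_mul, mul_inv_cancel, map_one, Module.End.one_apply] at this
    exact this.symm

end KMWeyl

/-- The facet of `Ξ_h` cut out by the supporting hyperplane `H^{(i)}` is the convex hull of
the `W^{(i)}`-orbit of `h`. -/
theorem stmt_3 {n : ℕ} {V : Type*} [AddCommGroup V] [Module ℝ V]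
    {W : Type*} [Group W] {M : CoxeterMatrix (Fin n)} (K : KMWeyl n V W M)
    (h : V) (hC : ∀ i, 0 < K.α i h)
    (ω : Fin n → (V →ₗ[ℝ] ℝ)) (hω : ∀ i j, ω i (K.cor j) = if i = j then 1 else 0)
    (i : Fin n) :
    convexHull ℝ (K.orb h) ∩ {x | ω i x = ω i h} =
      convexHull ℝ ((fun w => K.ρ w h) '' (K.std {j | j ≠ i} : Set W)) := by
  have key : ∀ w : W, ∃ c : Fin n → ℝ, (∀ m, 0 ≤ c m) ∧
      K.ρ w h = h - ∑ m, c m • K.cor m ∧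
      (∃ l, K.cs.wordProd l = w ∧ (∀ i', c i' = 0 → i' ∉ l)) :=
    fun w => K.orbit_lemma h hC (K.cs.length w) w rfl
  ext x
  constructor
  · rintro ⟨hxhull, hxeq⟩
    rw [convexHull_eq] at hxhull
    obtain ⟨ι, t, wt, z, hw0, hw1, hz, hcm⟩ := hxhull
    simp only [Set.mem_setOf_eq] at hxeq
    have hle : ∀ a ∈ t, ω i (z a) ≤ ω i h := by
      intro a ha
      obtain ⟨w, hwz⟩ := hz a ha
      change K.ρ w h = z a at hwz
      obtain ⟨c, hcnn, hceq, -⟩ := key w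
      rw [← hwz, hceq, map_sub, K.omega_sum ω hω i c]
      linarith [hcnn i]
    have hxsum : x = ∑ a ∈ t, wt a • z a := by
      rw [← hcm, Finset.centerMass_eq_of_sum_1 _ _ hw1]
    have e1 : ω i x = ∑ a ∈ t, wt a * ω i (z a) := by
      rw [hxsum, map_sum]
      simp
    have e2 : ∑ a ∈ t, wt a * ω i h = ω i h := by
      rw [← Finset.sum_mul, hw1, one_mul]
    have hzero : ∑ a ∈ t, wt a * (ω i h - ω i (z a)) = 0 := by
      simp only [mul_sub]
      rw [Finset.sum_sub_distrib, e2, ← e1, hxeq, sub_self]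
    have heach := (Finset.sum_eq_zero_iff_of_nonneg
      (fun a ha => mul_nonneg (hw0 a ha) (sub_nonneg.mpr (hle a ha)))).mp hzero
    rw [← hcm, ← Finset.centerMass_filter_ne_zero]
    apply Finset.centerMass_mem_convexHull
    · intro a ha
      exact hw0 a (Finset.filter_subset _ _ ha)
    · rw [Finset.sum_filter_ne_zero, hw1]
      norm_num
    · intro a ha
      rw [Finset.mem_filter] at ha
      obtain ⟨hat, hwa⟩ := ha
      have hzi0 : ω i (z a) = ω i h := by
        have h0 := heach a hat
        rcases mul_eq_zero.mp h0 with h1 | h1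
        · exact absurd h1 hwa
        · linarith
      obtain ⟨w, hwz⟩ := hz a hat
      change K.ρ w h = z a at hwz
      obtain ⟨c, hcnn, hceq, l, hlprod, hlsupp⟩ := key w
      have hci : c i = 0 := by
        rw [← hwz, hceq, map_sub, K.omega_sum ω hω i c] at hzi0
        linarith
      have hmem : w ∈ K.std {j | j ≠ i} := by
        rw [← hlprod]
        exact K.word_mem_std i l (fun c' hc' hc'i => (hlsupp i hci) (hc'i ▸ hc'))
      exact ⟨w, hmem, hwz⟩
  · intro hx
    constructor
    · exact convexHull_mono (by rintro y ⟨w, hw, rfl⟩; exact ⟨w, rfl⟩) hx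
    · have hconv : Convex ℝ {x : V | ω i x = ω i h} := convex_hyperplane (LinearMap.isLinear (ω i)) (ω i h)
      have hsub : (fun w => K.ρ w h) '' (K.std {j | j ≠ i} : Set W) ⊆
          {x : V | ω i x = ω i h} := by
        rintro y ⟨w, hw, rfl⟩
        exact K.std_omega ω hω i hw h
      exact convexHull_min hsub hconv hx
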